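/- Let H be a complex Hilbert space, P0 an orthogonal projection, f0 a unit vector with P0 f0 = f0, and P0⊥ = 1 − P0. Define, for X ∈ B₂(H)_{ah}, Q(X) = P0 X P0 + P0⊥ X P0⊥ + (f0⊗f0) X (f0⊗f0) − (f0⊗f0) X P0 − P0 X (f0⊗f0). Then Q is a bounded real-linear map of B₂(H)_{ah} into itself satisfying Q∘Q = Q and ⟨Q(X), Y⟩ = ⟨X, Q(Y)⟩ for the inner product ⟨X,Y⟩ = Re Tr(X Y*), and the range of Q equals the vertical space {Y ∈ B₂(H)_{ah} : Y P0 = P0 Y, Y f0 = 0}; i.e. Q is the orthogonal projection of B₂(H)_{ah} onto the vertical space at (P0,f0). -/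

import Mathlib

open scoped InnerProductSpace
open ContinuousLinearMap

/-- The rank-one operator `x ⊗ y`, with `(x ⊗ y) z = ⟨z, y⟩ x` (inner product linear in
the first variable); in Mathlib's convention this is `z ↦ ⟪y, z⟫ • x`. -/
noncomputable def rankOne {H : Type*} [NormedAddCommGroup H] [InnerProductSpace ℂ H]
    (x y : H) : H →L[ℂ] H :=
  (innerSL ℂ y).smulRight x

/-- `X` is a Hilbert–Schmidt operator, expressed via the Hilbert basis `e`. -/
def IsHilbertSchmidt {H : Type*} [NormedAddCommGroup H] [InnerProductSpace ℂ H]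
    [CompleteSpace H] {ι : Type*} (e : HilbertBasis ι ℂ H) (X : H →L[ℂ] H) : Prop :=
  Summable fun i => ‖X (e i)‖ ^ 2

/-- The Hilbert–Schmidt norm `‖X‖₂`, expressed via the Hilbert basis `e`. -/
noncomputable def hsNorm {H : Type*} [NormedAddCommGroup H] [InnerProductSpace ℂ H]
    [CompleteSpace H] {ι : Type*} (e : HilbertBasis ι ℂ H) (X : H →L[ℂ] H) : ℝ :=
  Real.sqrt (∑' i, ‖X (e i)‖ ^ 2)

/-- The real trace inner product `Re Tr(X Y*) = ∑ᵢ Re ⟪X eᵢ, Y eᵢ⟫` of Hilbert–Schmidt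
operators, expressed via the Hilbert basis `e`. -/
noncomputable def hsReInner {H : Type*} [NormedAddCommGroup H] [InnerProductSpace ℂ H]
    [CompleteSpace H] {ι : Type*} (e : HilbertBasis ι ℂ H) (X Y : H →L[ℂ] H) : ℝ :=
  ∑' i, ((⟪X (e i), Y (e i)⟫_ℂ : ℂ)).re

/-- The map `Q(X) = P0 X P0 + P0⊥ X P0⊥ + (f0⊗f0) X (f0⊗f0) − (f0⊗f0) X P0 − P0 X (f0⊗f0)`. -/
noncomputable def Qmap {H : Type*} [NormedAddCommGroup H] [InnerProductSpace ℂ H]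
    [CompleteSpace H] (P0 : H →L[ℂ] H) (f0 : H) (X : H →L[ℂ] H) : H →L[ℂ] H :=
  P0 * X * P0 + (1 - P0) * X * (1 - P0) + rankOne f0 f0 * X * rankOne f0 f0
    - rankOne f0 f0 * X * P0 - P0 * X * rankOne f0 f0

open scoped InnerProductSpace ENNReal NNReal
open ContinuousLinearMap

namespace QmapAux

variable {H : Type*} [NormedAddCommGroup H] [InnerProductSpace ℂ H] [CompleteSpace H]
  {ι : Type*}

/-- The Hilbert–Schmidt "squared norm" in `ℝ≥0∞`. -/
noncomputable def SE (e : HilbertBasis ι ℂ H) (X : H →L[ℂ] H) : ℝ≥0∞ :=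
  ∑' i, (‖X (e i)‖₊ : ℝ≥0∞) ^ 2

lemma en_sq_eq {E : Type*} [NormedAddCommGroup E] (x : E) :
    (‖x‖₊ : ℝ≥0∞) ^ 2 = ENNReal.ofReal (‖x‖ ^ 2) := by
  rw [ENNReal.ofReal_pow (norm_nonneg x), ofReal_norm, enorm_eq_nnnorm]

lemma parseval_hasSum (e : HilbertBasis ι ℂ H) (v : H) :
    HasSum (fun j => ‖⟪e j, v⟫_ℂ‖ ^ 2) (‖v‖ ^ 2) := by
  have h := Complex.hasSum_re (e.hasSum_inner_mul_inner v v)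
  have h1 : ∀ j : ι, (⟪v, e j⟫_ℂ * ⟪e j, v⟫_ℂ).re = ‖⟪e j, v⟫_ℂ‖ ^ 2 := by
    intro j
    rw [← inner_conj_symm v (e j), mul_comm, Complex.mul_conj]
    simp [Complex.normSq_eq_norm_sq, ← Complex.ofReal_pow]
  have h2 : (⟪v, v⟫_ℂ).re = ‖v‖ ^ 2 := by
    rw [inner_self_eq_norm_sq_to_K]
    simp [← Complex.ofReal_pow]
  rw [h2] at h
  simp only [h1] at h
  exact h

lemma parseval_en (e : HilbertBasis ι ℂ H) (v : H) :
    ∑' j, (‖⟪e j, v⟫_ℂ‖₊ : ℝ≥0∞) ^ 2 = (‖v‖₊ : ℝ≥0∞) ^ 2 := by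
  have h := parseval_hasSum e v
  calc ∑' j, (‖⟪e j, v⟫_ℂ‖₊ : ℝ≥0∞) ^ 2
      = ∑' j, ENNReal.ofReal (‖⟪e j, v⟫_ℂ‖ ^ 2) := by simp only [en_sq_eq]
    _ = ENNReal.ofReal (‖v‖ ^ 2) := by
        rw [← ENNReal.ofReal_tsum_of_nonneg (fun j => sq_nonneg _) h.summable, h.tsum_eq]
    _ = (‖v‖₊ : ℝ≥0∞) ^ 2 := (en_sq_eq v).symm

lemma summable_coe_iff {κ : Type*} (g : κ → ℝ≥0) :
    Summable (fun k => ((g k : ℝ≥0) : ℝ)) ↔ (∑' k, (g k : ℝ≥0∞)) ≠ ∞ := by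
  rw [ENNReal.tsum_coe_ne_top_iff_summable, NNReal.summable_coe]

lemma isHS_iff (e : HilbertBasis ι ℂ H) (X : H →L[ℂ] H) :
    IsHilbertSchmidt e X ↔ SE e X ≠ ∞ := by
  have h1 : (fun i => ‖X (e i)‖ ^ 2) = fun i => ((‖X (e i)‖₊ ^ 2 : ℝ≥0) : ℝ) := by
    funext i; simp
  have h2 : SE e X = ∑' i, ((‖X (e i)‖₊ ^ 2 : ℝ≥0) : ℝ≥0∞) := by
    unfold SE; norm_cast
  unfold IsHilbertSchmidt
  rw [h1, summable_coe_iff, h2]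

lemma tsum_sq_eq_toReal (e : HilbertBasis ι ℂ H) (X : H →L[ℂ] H) :
    ∑' i, ‖X (e i)‖ ^ 2 = (SE e X).toReal := by
  unfold SE
  rw [ENNReal.tsum_toReal_eq (fun i => ENNReal.pow_ne_top ENNReal.coe_ne_top)]
  exact tsum_congr fun i => by simp [ENNReal.toReal_pow]

lemma hsNorm_eq (e : HilbertBasis ι ℂ H) (X : H →L[ℂ] H) :
    hsNorm e X = Real.sqrt (SE e X).toReal := by
  rw [hsNorm, tsum_sq_eq_toReal]

lemma SE_double (e : HilbertBasis ι ℂ H) (X : H →L[ℂ] H) :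
    SE e X = ∑' i, ∑' j, (‖⟪e j, X (e i)⟫_ℂ‖₊ : ℝ≥0∞) ^ 2 :=
  tsum_congr fun i => (parseval_en e (X (e i))).symm

lemma nnnorm_inner_symm' (x y : H) : ‖⟪x, y⟫_ℂ‖₊ = ‖⟪y, x⟫_ℂ‖₊ :=
  NNReal.eq (norm_inner_symm x y)

lemma SE_adjoint (e : HilbertBasis ι ℂ H) (X : H →L[ℂ] H) :
    SE e (adjoint X) = SE e X := by
  calc SE e (adjoint X) = ∑' i, ∑' j, (‖⟪e j, adjoint X (e i)⟫_ℂ‖₊ : ℝ≥0∞) ^ 2 :=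
        SE_double e (adjoint X)
    _ = ∑' i, ∑' j, (‖⟪e i, X (e j)⟫_ℂ‖₊ : ℝ≥0∞) ^ 2 := by
        refine tsum_congr fun i => tsum_congr fun j => ?_
        rw [adjoint_inner_right, nnnorm_inner_symm']
    _ = SE e X := by rw [SE_double e X]; exact ENNReal.tsum_comm

lemma SE_mul_left (e : HilbertBasis ι ℂ H) (A X : H →L[ℂ] H) :
    SE e (A * X) ≤ (‖A‖₊ : ℝ≥0∞) ^ 2 * SE e X := by
  unfold SE
  rw [← ENNReal.tsum_mul_left]
  refine ENNReal.tsum_le_tsum fun i => ?_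
  have h : ‖(A * X) (e i)‖₊ ≤ ‖A‖₊ * ‖X (e i)‖₊ := by
    rw [ContinuousLinearMap.mul_apply]; exact A.le_opNNNorm _
  calc (‖(A * X) (e i)‖₊ : ℝ≥0∞) ^ 2 ≤ ((‖A‖₊ * ‖X (e i)‖₊ : ℝ≥0) : ℝ≥0∞) ^ 2 := by
        exact_mod_cast pow_le_pow_left' h 2
    _ = (‖A‖₊ : ℝ≥0∞) ^ 2 * (‖X (e i)‖₊ : ℝ≥0∞) ^ 2 := by push_cast; ring

lemma adj_mul (X Y : H →L[ℂ] H) : adjoint (X * Y) = adjoint Y * adjoint X := by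
  rw [← star_eq_adjoint, ← star_eq_adjoint, ← star_eq_adjoint, star_mul]

lemma nnnorm_adjoint (X : H →L[ℂ] H) : ‖adjoint X‖₊ = ‖X‖₊ :=
  NNReal.eq (LinearIsometryEquiv.norm_map ContinuousLinearMap.adjoint X)

lemma SE_mul_right (e : HilbertBasis ι ℂ H) (X B : H →L[ℂ] H) :
    SE e (X * B) ≤ (‖B‖₊ : ℝ≥0∞) ^ 2 * SE e X := by
  calc SE e (X * B) = SE e (adjoint (X * B)) := (SE_adjoint e _).symm
    _ = SE e (adjoint B * adjoint X) := by rw [adj_mul]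
    _ ≤ (‖adjoint B‖₊ : ℝ≥0∞) ^ 2 * SE e (adjoint X) := SE_mul_left e _ _
    _ = (‖B‖₊ : ℝ≥0∞) ^ 2 * SE e X := by rw [nnnorm_adjoint, SE_adjoint]

lemma SE_conj (e : HilbertBasis ι ℂ H) (A X B : H →L[ℂ] H) :
    SE e (A * X * B) ≤ (‖A‖₊ : ℝ≥0∞) ^ 2 * (‖B‖₊ : ℝ≥0∞) ^ 2 * SE e X := by
  calc SE e ((A * X) * B) ≤ (‖B‖₊ : ℝ≥0∞) ^ 2 * SE e (A * X) := SE_mul_right e _ _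
    _ ≤ (‖B‖₊ : ℝ≥0∞) ^ 2 * ((‖A‖₊ : ℝ≥0∞) ^ 2 * SE e X) := by
        gcongr
        exact SE_mul_left e _ _
    _ = (‖A‖₊ : ℝ≥0∞) ^ 2 * (‖B‖₊ : ℝ≥0∞) ^ 2 * SE e X := by ring

lemma en_sq_add (a b : ℝ≥0∞) : (a + b) ^ 2 ≤ 3 * a ^ 2 + 3 * b ^ 2 := by
  have hab : a * b ≤ a ^ 2 + b ^ 2 := by
    rcases le_total a b with h | h
    · calc a * b ≤ b * b := mul_le_mul_left h b
        _ = b ^ 2 := (sq b).symm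
        _ ≤ a ^ 2 + b ^ 2 := le_add_self
    · calc a * b ≤ a * a := mul_le_mul_right h a
        _ = a ^ 2 := (sq a).symm
        _ ≤ a ^ 2 + b ^ 2 := le_self_add
  calc (a + b) ^ 2 = a ^ 2 + b ^ 2 + (a * b + a * b) := by ring
    _ ≤ a ^ 2 + b ^ 2 + ((a ^ 2 + b ^ 2) + (a ^ 2 + b ^ 2)) := by gcongr
    _ = 3 * a ^ 2 + 3 * b ^ 2 := by ring

lemma SE_add (e : HilbertBasis ι ℂ H) (X Y : H →L[ℂ] H) :
    SE e (X + Y) ≤ 3 * SE e X + 3 * SE e Y := by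
  unfold SE
  rw [← ENNReal.tsum_mul_left, ← ENNReal.tsum_mul_left, ← ENNReal.tsum_add]
  refine ENNReal.tsum_le_tsum fun i => ?_
  calc (‖(X + Y) (e i)‖₊ : ℝ≥0∞) ^ 2
      ≤ ((‖X (e i)‖₊ : ℝ≥0∞) + (‖Y (e i)‖₊ : ℝ≥0∞)) ^ 2 := by
        gcongr
        rw [ContinuousLinearMap.add_apply]
        exact_mod_cast nnnorm_add_le _ _
    _ ≤ 3 * (‖X (e i)‖₊ : ℝ≥0∞) ^ 2 + 3 * (‖Y (e i)‖₊ : ℝ≥0∞) ^ 2 := en_sq_add _ _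

lemma SE_neg (e : HilbertBasis ι ℂ H) (X : H →L[ℂ] H) : SE e (-X) = SE e X := by
  unfold SE
  simp [ContinuousLinearMap.neg_apply]

lemma SE_sub (e : HilbertBasis ι ℂ H) (X Y : H →L[ℂ] H) :
    SE e (X - Y) ≤ 3 * SE e X + 3 * SE e Y := by
  rw [sub_eq_add_neg]
  simpa [SE_neg] using SE_add e X (-Y)

lemma summable_sq (e : HilbertBasis ι ℂ H) {X : H →L[ℂ] H} (hX : SE e X ≠ ∞) :
    Summable fun i => ‖X (e i)‖ ^ 2 :=
  (isHS_iff e X).mpr hX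

lemma summable_pair (e : HilbertBasis ι ℂ H) {X Y : H →L[ℂ] H}
    (hX : SE e X ≠ ∞) (hY : SE e Y ≠ ∞) :
    Summable fun i => ⟪X (e i), Y (e i)⟫_ℂ := by
  refine Summable.of_norm_bounded (g := fun i => ‖X (e i)‖ ^ 2 + ‖Y (e i)‖ ^ 2)
    ((summable_sq e hX).add (summable_sq e hY)) fun i => ?_
  calc ‖⟪X (e i), Y (e i)⟫_ℂ‖ ≤ ‖X (e i)‖ * ‖Y (e i)‖ := norm_inner_le_norm _ _
    _ ≤ ‖X (e i)‖ ^ 2 + ‖Y (e i)‖ ^ 2 := by nlinarith [sq_nonneg (‖X (e i)‖ - ‖Y (e i)‖)]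

lemma summable_double (e : HilbertBasis ι ℂ H) {X : H →L[ℂ] H} (hX : SE e X ≠ ∞) :
    Summable fun p : ι × ι => ‖⟪e p.2, X (e p.1)⟫_ℂ‖ ^ 2 := by
  have h1 : (fun p : ι × ι => ‖⟪e p.2, X (e p.1)⟫_ℂ‖ ^ 2)
      = fun p : ι × ι => ((‖⟪e p.2, X (e p.1)⟫_ℂ‖₊ ^ 2 : ℝ≥0) : ℝ) := by
    funext p; simp
  rw [h1]
  rw [show (fun p : ι × ι => ((‖⟪e p.2, X (e p.1)⟫_ℂ‖₊ ^ 2 : ℝ≥0) : ℝ))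
      = fun p : ι × ι => (((fun q : ι × ι => ‖⟪e q.2, X (e q.1)⟫_ℂ‖₊ ^ 2) p : ℝ≥0) : ℝ) from rfl]
  rw [summable_coe_iff]
  have h2 : ∑' p : ι × ι, ((‖⟪e p.2, X (e p.1)⟫_ℂ‖₊ ^ 2 : ℝ≥0) : ℝ≥0∞) = SE e X := by
    rw [ENNReal.tsum_prod']
    rw [SE_double e X]
    refine tsum_congr fun i => tsum_congr fun j => ?_
    norm_cast
  rw [h2]
  exact hX

lemma t_swap (e : HilbertBasis ι ℂ H) {X Y : H →L[ℂ] H}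
    (hX : SE e X ≠ ∞) (hY : SE e Y ≠ ∞) :
    ∑' i, ⟪X (e i), Y (e i)⟫_ℂ = ∑' j, ⟪adjoint Y (e j), adjoint X (e j)⟫_ℂ := by
  set g : ι → ι → ℂ := fun i j => ⟪X (e i), e j⟫_ℂ * ⟪e j, Y (e i)⟫_ℂ with hgdef
  have hg : Summable (Function.uncurry g) := by
    refine Summable.of_norm_bounded
      (g := fun p : ι × ι => ‖⟪e p.2, X (e p.1)⟫_ℂ‖ ^ 2 + ‖⟪e p.2, Y (e p.1)⟫_ℂ‖ ^ 2)
      ((summable_double e hX).add (summable_double e hY)) ?_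
    rintro ⟨i, j⟩
    have hn : ‖Function.uncurry g (i, j)‖
        = ‖⟪e j, X (e i)⟫_ℂ‖ * ‖⟪e j, Y (e i)⟫_ℂ‖ := by
      simp only [Function.uncurry, hgdef, norm_mul]
      rw [norm_inner_symm (X (e i))]
    rw [hn]
    dsimp only
    nlinarith [sq_nonneg (‖⟪e j, X (e i)⟫_ℂ‖ - ‖⟪e j, Y (e i)⟫_ℂ‖),
      norm_nonneg (⟪e j, X (e i)⟫_ℂ), norm_nonneg (⟪e j, Y (e i)⟫_ℂ)]
  have hfib1 : ∀ i, Summable (g i) := fun i =>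
    e.summable_inner_mul_inner (X (e i)) (Y (e i))
  have hfib2 : ∀ j, Summable fun i => g i j := fun j =>
    hg.comp_injective (i := fun i => (i, j)) fun a b h => by simpa using congrArg Prod.fst h
  calc ∑' i, ⟪X (e i), Y (e i)⟫_ℂ = ∑' i, ∑' j, g i j :=
        tsum_congr fun i => (e.tsum_inner_mul_inner (X (e i)) (Y (e i))).symm
    _ = ∑' j, ∑' i, g i j := (hg.tsum_comm' hfib1 hfib2).symm
    _ = ∑' j, ⟪adjoint Y (e j), adjoint X (e j)⟫_ℂ := by
        refine tsum_congr fun j => ?_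
        have h1 : ∀ i, g i j = ⟪adjoint Y (e j), e i⟫_ℂ * ⟪e i, adjoint X (e j)⟫_ℂ := by
          intro i
          rw [hgdef]
          dsimp only
          rw [← adjoint_inner_right X, ← adjoint_inner_left Y, mul_comm]
        rw [tsum_congr h1]
        exact e.tsum_inner_mul_inner (adjoint Y (e j)) (adjoint X (e j))

lemma t_left (e : HilbertBasis ι ℂ H) (A X Y : H →L[ℂ] H) :
    ∑' i, ⟪(A * X) (e i), Y (e i)⟫_ℂ = ∑' i, ⟪X (e i), (adjoint A * Y) (e i)⟫_ℂ :=
  tsum_congr fun i => by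
    simp only [ContinuousLinearMap.mul_apply]
    exact (adjoint_inner_right A _ _).symm

lemma SE_mul_left_ne_top (e : HilbertBasis ι ℂ H) (A : H →L[ℂ] H) {X : H →L[ℂ] H}
    (hX : SE e X ≠ ∞) : SE e (A * X) ≠ ∞ :=
  ne_top_of_le_ne_top (ENNReal.mul_ne_top (ENNReal.pow_ne_top ENNReal.coe_ne_top) hX)
    (SE_mul_left e A X)

lemma SE_mul_right_ne_top (e : HilbertBasis ι ℂ H) (B : H →L[ℂ] H) {X : H →L[ℂ] H}
    (hX : SE e X ≠ ∞) : SE e (X * B) ≠ ∞ :=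
  ne_top_of_le_ne_top (ENNReal.mul_ne_top (ENNReal.pow_ne_top ENNReal.coe_ne_top) hX)
    (SE_mul_right e X B)

lemma SE_adjoint_ne_top (e : HilbertBasis ι ℂ H) {X : H →L[ℂ] H}
    (hX : SE e X ≠ ∞) : SE e (adjoint X) ≠ ∞ := by rw [SE_adjoint]; exact hX

lemma t_right (e : HilbertBasis ι ℂ H) {X Y : H →L[ℂ] H}
    (hX : SE e X ≠ ∞) (hY : SE e Y ≠ ∞) (B : H →L[ℂ] H) :
    ∑' i, ⟪(X * B) (e i), Y (e i)⟫_ℂ = ∑' i, ⟪X (e i), (Y * adjoint B) (e i)⟫_ℂ := by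
  have hXB : SE e (X * B) ≠ ∞ := SE_mul_right_ne_top e B hX
  have hBY : SE e (B * adjoint Y) ≠ ∞ := SE_mul_left_ne_top e B (SE_adjoint_ne_top e hY)
  have hXa : SE e (adjoint X) ≠ ∞ := SE_adjoint_ne_top e hX
  calc ∑' i, ⟪(X * B) (e i), Y (e i)⟫_ℂ
      = ∑' j, ⟪adjoint Y (e j), adjoint (X * B) (e j)⟫_ℂ := t_swap e hXB hY
    _ = ∑' j, ⟪(B * adjoint Y) (e j), adjoint X (e j)⟫_ℂ := by
        rw [adj_mul]
        exact tsum_congr fun j => by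
          simp only [ContinuousLinearMap.mul_apply]
          exact adjoint_inner_right B _ _
    _ = ∑' i, ⟪adjoint (adjoint X) (e i), adjoint (B * adjoint Y) (e i)⟫_ℂ :=
        t_swap e hBY hXa
    _ = ∑' i, ⟪X (e i), (Y * adjoint B) (e i)⟫_ℂ := by
        rw [adj_mul, adjoint_adjoint, adjoint_adjoint]

lemma t_term (e : HilbertBasis ι ℂ H) {X Y A B : H →L[ℂ] H}
    (hA : adjoint A = A) (hB : adjoint B = B) (hX : SE e X ≠ ∞) (hY : SE e Y ≠ ∞) :
    ∑' i, ⟪(A * X * B) (e i), Y (e i)⟫_ℂ = ∑' i, ⟪X (e i), (A * Y * B) (e i)⟫_ℂ := by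
  have hAX : SE e (A * X) ≠ ∞ := SE_mul_left_ne_top e A hX
  calc ∑' i, ⟪((A * X) * B) (e i), Y (e i)⟫_ℂ
      = ∑' i, ⟪(A * X) (e i), (Y * adjoint B) (e i)⟫_ℂ := t_right e hAX hY B
    _ = ∑' i, ⟪X (e i), (adjoint A * (Y * B)) (e i)⟫_ℂ := by
        rw [hB]; exact t_left e A X (Y * B)
    _ = ∑' i, ⟪X (e i), (A * Y * B) (e i)⟫_ℂ := by rw [hA, ← mul_assoc]

lemma re_tsum {f : ι → ℂ} (h : Summable f) : ∑' i, (f i).re = (∑' i, f i).re :=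
  (Complex.hasSum_re h.hasSum).tsum_eq

lemma hsReInner_eq_re (e : HilbertBasis ι ℂ H) {X Y : H →L[ℂ] H}
    (hX : SE e X ≠ ∞) (hY : SE e Y ≠ ∞) :
    hsReInner e X Y = (∑' i, ⟪X (e i), Y (e i)⟫_ℂ).re :=
  re_tsum (summable_pair e hX hY)

lemma tsum_five {f1 f2 f3 f4 f5 : ι → ℂ} (h1 : Summable f1) (h2 : Summable f2)
    (h3 : Summable f3) (h4 : Summable f4) (h5 : Summable f5) :
    ∑' i, (f1 i + f2 i + f3 i - f4 i - f5 i)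
      = ∑' i, f1 i + ∑' i, f2 i + ∑' i, f3 i - ∑' i, f4 i - ∑' i, f5 i := by
  rw [Summable.tsum_sub (((h1.add h2).add h3).sub h4) h5, Summable.tsum_sub ((h1.add h2).add h3) h4,
    Summable.tsum_add (h1.add h2) h3, Summable.tsum_add h1 h2]

end QmapAux

set_option maxHeartbeats 1000000 in
set_option synthInstance.maxHeartbeats 1000000 in
open QmapAux in
/-- `Q` is the orthogonal projection of the real Hilbert space
`B₂(H)_{ah}` (anti-Hermitian Hilbert–Schmidt operators, real trace inner product)
onto the vertical space `{Y : Y P0 = P0 Y, Y f0 = 0}` at `(P0, f0)`: it maps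
`B₂(H)_{ah}` into itself, is bounded and real-linear, idempotent, symmetric for the
trace inner product, its range is the vertical space, and it fixes the vertical space. -/
theorem Qmap_orthogonal_projection_onto_vertical
    {H : Type*} [NormedAddCommGroup H] [InnerProductSpace ℂ H] [CompleteSpace H]
    {ι : Type*} (e : HilbertBasis ι ℂ H)
    (P0 : H →L[ℂ] H) (hP0sa : IsSelfAdjoint P0) (hP0idem : P0 * P0 = P0)
    (f0 : H) (hf0 : ‖f0‖ = 1) (hf0fix : P0 f0 = f0) :
    -- `Q` maps `B₂(H)_{ah}` into itself
    (∀ X : H →L[ℂ] H, IsHilbertSchmidt e X → adjoint X = -X →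
      IsHilbertSchmidt e (Qmap P0 f0 X) ∧
        adjoint (Qmap P0 f0 X) = -(Qmap P0 f0 X)) ∧
    -- `Q` is real-linear
    (∀ (r : ℝ) (X Y : H →L[ℂ] H),
      Qmap P0 f0 (r • X + Y) = r • Qmap P0 f0 X + Qmap P0 f0 Y) ∧
    -- `Q` is bounded for the Hilbert–Schmidt norm
    (∃ C : ℝ, ∀ X : H →L[ℂ] H, IsHilbertSchmidt e X → adjoint X = -X →
      hsNorm e (Qmap P0 f0 X) ≤ C * hsNorm e X) ∧
    -- `Q ∘ Q = Q`
    (∀ X : H →L[ℂ] H, IsHilbertSchmidt e X → adjoint X = -X →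
      Qmap P0 f0 (Qmap P0 f0 X) = Qmap P0 f0 X) ∧
    -- `⟨Q X, Y⟩ = ⟨X, Q Y⟩`
    (∀ X Y : H →L[ℂ] H, IsHilbertSchmidt e X → adjoint X = -X →
      IsHilbertSchmidt e Y → adjoint Y = -Y →
      hsReInner e (Qmap P0 f0 X) Y = hsReInner e X (Qmap P0 f0 Y)) ∧
    -- the range of `Q` lies in the vertical space ...
    (∀ X : H →L[ℂ] H, IsHilbertSchmidt e X → adjoint X = -X →
      Qmap P0 f0 X * P0 = P0 * Qmap P0 f0 X ∧ Qmap P0 f0 X f0 = 0) ∧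
    -- ... and `Q` fixes the vertical space (so its range is exactly the vertical space)
    (∀ Y : H →L[ℂ] H, IsHilbertSchmidt e Y → adjoint Y = -Y →
      Y * P0 = P0 * Y → Y f0 = 0 → Qmap P0 f0 Y = Y) := by
  classical
  set F := rankOne f0 f0 with hFdef
  have rankOne_apply : ∀ z : H, F z = ⟪f0, z⟫_ℂ • f0 := fun z => rfl
  have hPsa : adjoint P0 = P0 := by rw [← star_eq_adjoint]; exact hP0sa.star_eq
  have hFsa : adjoint F = F := by
    symm
    rw [ContinuousLinearMap.eq_adjoint_iff]
    intro x y
    simp only [rankOne_apply, inner_smul_left, inner_smul_right, inner_conj_symm]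
    ring
  have hf0inner : ⟪f0, f0⟫_ℂ = 1 := by
    rw [inner_self_eq_norm_sq_to_K, hf0]; norm_num
  have hFf0 : F f0 = f0 := by rw [rankOne_apply, hf0inner, one_smul]
  have hFF : F * F = F := by
    ext z
    simp [ContinuousLinearMap.mul_apply, rankOne_apply, inner_smul_right, hf0inner, hf0]
  have hPF : P0 * F = F := by
    ext z
    simp [ContinuousLinearMap.mul_apply, rankOne_apply, map_smul, hf0fix]
  have hFP : F * P0 = F := by
    ext z
    simp only [ContinuousLinearMap.mul_apply, rankOne_apply]
    congr 1
    rw [← adjoint_inner_left, hPsa, hf0fix]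
  have hPPl : ∀ Z : H →L[ℂ] H, P0 * (P0 * Z) = P0 * Z := fun Z => by rw [← mul_assoc, hP0idem]
  have hPFl : ∀ Z : H →L[ℂ] H, P0 * (F * Z) = F * Z := fun Z => by rw [← mul_assoc, hPF]
  have hFPl : ∀ Z : H →L[ℂ] H, F * (P0 * Z) = F * Z := fun Z => by rw [← mul_assoc, hFP]
  have hFFl : ∀ Z : H →L[ℂ] H, F * (F * Z) = F * Z := fun Z => by rw [← mul_assoc, hFF]
  have hP'sa : adjoint (1 - P0) = 1 - P0 := by
    rw [← star_eq_adjoint, star_sub, star_one, hP0sa.star_eq]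
  -- the quantitative bound
  set a := (‖P0‖₊ : ℝ≥0∞) ^ 2 with hadef
  set b := (‖(1 : H →L[ℂ] H) - P0‖₊ : ℝ≥0∞) ^ 2 with hbdef
  set c := (‖F‖₊ : ℝ≥0∞) ^ 2 with hcdef
  set K : ℝ≥0∞ := 3 * (3 * (3 * (3 * (a * a) + 3 * (b * b)) + 3 * (c * c)) + 3 * (c * a))
      + 3 * (a * c) with hKdef
  have ha : a ≠ ∞ := ENNReal.pow_ne_top ENNReal.coe_ne_top
  have hb : b ≠ ∞ := ENNReal.pow_ne_top ENNReal.coe_ne_top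
  have hc : c ≠ ∞ := ENNReal.pow_ne_top ENNReal.coe_ne_top
  have hK : K ≠ ∞ := by
    rw [hKdef]
    finiteness
  have key : ∀ Z : H →L[ℂ] H, SE e (Qmap P0 f0 Z) ≤ K * SE e Z := by
    intro Z
    have h1 : SE e (P0 * Z * P0) ≤ a * a * SE e Z := SE_conj e P0 Z P0
    have h2 : SE e ((1 - P0) * Z * (1 - P0)) ≤ b * b * SE e Z := SE_conj e _ Z _
    have h3 : SE e (F * Z * F) ≤ c * c * SE e Z := SE_conj e F Z F
    have h4 : SE e (F * Z * P0) ≤ c * a * SE e Z := SE_conj e F Z P0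
    have h5 : SE e (P0 * Z * F) ≤ a * c * SE e Z := SE_conj e P0 Z F
    calc SE e (Qmap P0 f0 Z)
        = SE e (P0 * Z * P0 + (1 - P0) * Z * (1 - P0) + F * Z * F - F * Z * P0
            - P0 * Z * F) := rfl
      _ ≤ 3 * SE e (P0 * Z * P0 + (1 - P0) * Z * (1 - P0) + F * Z * F - F * Z * P0)
            + 3 * SE e (P0 * Z * F) := SE_sub e _ _
      _ ≤ 3 * (3 * SE e (P0 * Z * P0 + (1 - P0) * Z * (1 - P0) + F * Z * F)
            + 3 * SE e (F * Z * P0)) + 3 * SE e (P0 * Z * F) := by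
          gcongr
          exact SE_sub e _ _
      _ ≤ 3 * (3 * (3 * SE e (P0 * Z * P0 + (1 - P0) * Z * (1 - P0))
            + 3 * SE e (F * Z * F)) + 3 * SE e (F * Z * P0)) + 3 * SE e (P0 * Z * F) := by
          gcongr
          exact SE_add e _ _
      _ ≤ 3 * (3 * (3 * (3 * SE e (P0 * Z * P0) + 3 * SE e ((1 - P0) * Z * (1 - P0)))
            + 3 * SE e (F * Z * F)) + 3 * SE e (F * Z * P0)) + 3 * SE e (P0 * Z * F) := by
          gcongr
          exact SE_add e _ _
      _ ≤ 3 * (3 * (3 * (3 * (a * a * SE e Z) + 3 * (b * b * SE e Z))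
            + 3 * (c * c * SE e Z)) + 3 * (c * a * SE e Z)) + 3 * (a * c * SE e Z) := by
          gcongr
      _ = K * SE e Z := by rw [hKdef]; ring
  have hQ_ne : ∀ Z : H →L[ℂ] H, SE e Z ≠ ∞ → SE e (Qmap P0 f0 Z) ≠ ∞ := fun Z hZ =>
    ne_top_of_le_ne_top (ENNReal.mul_ne_top hK hZ) (key Z)
  have cj : ∀ (A B : H →L[ℂ] H) {Z : H →L[ℂ] H}, SE e Z ≠ ∞ → SE e (A * Z * B) ≠ ∞ :=
    fun A B Z hZ => SE_mul_right_ne_top e B (SE_mul_left_ne_top e A hZ)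
  refine ⟨?_, ?_, ?_, ?_, ?_, ?_, ?_⟩
  · -- Q maps into itself
    intro X hX hXa
    have hS : SE e X ≠ ∞ := (isHS_iff e X).mp hX
    refine ⟨(isHS_iff e _).mpr (hQ_ne X hS), ?_⟩
    have hXs : star X = -X := by rw [star_eq_adjoint]; exact hXa
    have hFs : star F = F := by rw [star_eq_adjoint]; exact hFsa
    rw [← star_eq_adjoint]
    simp only [Qmap, ← hFdef, star_sub, star_add, star_mul, star_one, hP0sa.star_eq, hFs, hXs,
      mul_neg, neg_mul, neg_neg, neg_sub, neg_add, mul_assoc]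
    abel
  · -- real-linear
    intro r X Y
    simp only [Qmap, mul_add, add_mul, mul_smul_comm, smul_mul_assoc, smul_add, smul_sub]
    abel
  · -- bounded
    refine ⟨Real.sqrt K.toReal, ?_⟩
    intro X hX hXa
    have hS : SE e X ≠ ∞ := (isHS_iff e X).mp hX
    rw [hsNorm_eq, hsNorm_eq, ← Real.sqrt_mul ENNReal.toReal_nonneg]
    apply Real.sqrt_le_sqrt
    calc (SE e (Qmap P0 f0 X)).toReal ≤ (K * SE e X).toReal :=
          ENNReal.toReal_mono (ENNReal.mul_ne_top hK hS) (key X)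
      _ = K.toReal * (SE e X).toReal := ENNReal.toReal_mul
  · -- idempotent
    intro X _ _
    simp only [Qmap, ← hFdef, mul_sub, sub_mul, mul_add, add_mul, one_mul, mul_one, mul_assoc,
      hP0idem, hFF, hPF, hFP, hPPl, hPFl, hFPl, hFFl]
    abel
  · -- symmetric
    intro X Y hX hXa hY hYa
    have hSX : SE e X ≠ ∞ := (isHS_iff e X).mp hX
    have hSY : SE e Y ≠ ∞ := (isHS_iff e Y).mp hY
    rw [hsReInner_eq_re e (hQ_ne X hSX) hSY, hsReInner_eq_re e hSX (hQ_ne Y hSY)]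
    congr 1
    have splitL : (fun i => ⟪(Qmap P0 f0 X) (e i), Y (e i)⟫_ℂ) = fun i =>
        ⟪(P0 * X * P0) (e i), Y (e i)⟫_ℂ + ⟪((1 - P0) * X * (1 - P0)) (e i), Y (e i)⟫_ℂ
          + ⟪(F * X * F) (e i), Y (e i)⟫_ℂ - ⟪(F * X * P0) (e i), Y (e i)⟫_ℂ
          - ⟪(P0 * X * F) (e i), Y (e i)⟫_ℂ := by
      funext i
      simp only [Qmap, ← hFdef, ContinuousLinearMap.sub_apply, ContinuousLinearMap.add_apply,
        inner_sub_left, inner_add_left]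
    have splitR : (fun i => ⟪X (e i), (Qmap P0 f0 Y) (e i)⟫_ℂ) = fun i =>
        ⟪X (e i), (P0 * Y * P0) (e i)⟫_ℂ + ⟪X (e i), ((1 - P0) * Y * (1 - P0)) (e i)⟫_ℂ
          + ⟪X (e i), (F * Y * F) (e i)⟫_ℂ - ⟪X (e i), (F * Y * P0) (e i)⟫_ℂ
          - ⟪X (e i), (P0 * Y * F) (e i)⟫_ℂ := by
      funext i
      simp only [Qmap, ← hFdef, ContinuousLinearMap.sub_apply, ContinuousLinearMap.add_apply,
        inner_sub_right, inner_add_right]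
    rw [splitL, splitR]
    rw [tsum_five (summable_pair e (cj P0 P0 hSX) hSY)
      (summable_pair e (cj (1 - P0) (1 - P0) hSX) hSY)
      (summable_pair e (cj F F hSX) hSY)
      (summable_pair e (cj F P0 hSX) hSY)
      (summable_pair e (cj P0 F hSX) hSY)]
    rw [tsum_five (summable_pair e hSX (cj P0 P0 hSY))
      (summable_pair e hSX (cj (1 - P0) (1 - P0) hSY))
      (summable_pair e hSX (cj F F hSY))
      (summable_pair e hSX (cj F P0 hSY))
      (summable_pair e hSX (cj P0 F hSY))]
    rw [t_term e hPsa hPsa hSX hSY, t_term e hP'sa hP'sa hSX hSY,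
      t_term e hFsa hFsa hSX hSY, t_term e hFsa hPsa hSX hSY, t_term e hPsa hFsa hSX hSY]
  · -- range in vertical space
    intro X _ _
    constructor
    · simp only [Qmap, ← hFdef, mul_sub, sub_mul, mul_add, add_mul, one_mul, mul_one, mul_assoc,
        hP0idem, hFF, hPF, hFP, hPPl, hPFl, hFPl, hFFl]
      abel
    · have h1 : ((1 : H →L[ℂ] H) - P0) f0 = 0 := by
        simp [ContinuousLinearMap.sub_apply, hf0fix]
      simp only [Qmap, ← hFdef, ContinuousLinearMap.sub_apply, ContinuousLinearMap.add_apply,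
        ContinuousLinearMap.mul_apply, hf0fix, hFf0, h1, map_zero]
      abel
  · -- fixes the vertical space
    intro Y hY hYa hcomm hYf0
    have hYF : Y * F = 0 := by
      ext z
      simp [ContinuousLinearMap.mul_apply, rankOne_apply, map_smul, hYf0]
    have hFY : F * Y = 0 := by
      ext z
      simp only [ContinuousLinearMap.mul_apply, rankOne_apply,
        ContinuousLinearMap.zero_apply]
      have hz : ⟪f0, Y z⟫_ℂ = 0 := by
        rw [← adjoint_inner_left, hYa]
        simp [hYf0]
      rw [hz, zero_smul]
    simp only [Qmap, ← hFdef, mul_sub, sub_mul, mul_add, add_mul, one_mul, mul_one, mul_assoc,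
      hcomm, hP0idem, hPPl, hPFl, hFPl, hFFl, hFF, hPF, hFP, hYF, hFY,
      zero_mul, mul_zero, zero_sub, sub_zero, zero_add, add_zero, neg_zero]
    abel
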